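/- arXiv:1210.6193 — 2 statements merged into one kernel-verified Lean document; each statement's English description precedes it below -/
import Mathlib

section
/- Let (ξ_i)_{i≥1} be i.i.d. non-negative random variables with P(ξ_1 ≤ t) ≤ 1/2 + t/(εh) for all t > 0, and S_n = Σξ_i. Then there exist constants c₂ > 0 (small) and c₃ > 0 such that P(S_n ≤ c₂ n h) ≤ e^{-c₃ n} for all n ∈ ℕ. -/
open MeasureTheory ProbabilityTheory Real Finset

/-- Exponential lower-tail bound: `P(S_n ≤ c₂ n h) ≤ e^{-c₃ n}`. -/
theorem stmt_13 {Ω : Type*} [MeasurableSpace Ω] (μ : Measure Ω) [IsProbabilityMeasure μ]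
    (ξ : ℕ → Ω → ℝ) (hξm : ∀ i, Measurable (ξ i)) (hξ0 : ∀ i ω, 0 ≤ ξ i ω)
    (hindep : iIndepFun ξ μ)
    (hident : ∀ i, IdentDistrib (ξ i) (ξ 0) μ μ)
    (ε h : ℝ) (hε : 0 < ε) (hh : 0 < h)
    (htail : ∀ t > (0:ℝ), (μ {ω | ξ 0 ω ≤ t}).toReal ≤ 1 / 2 + t / (ε * h)) :
    ∃ c₂ > (0:ℝ), ∃ c₃ > (0:ℝ), ∀ n : ℕ,
      (μ {ω | ∑ i ∈ Finset.range n, ξ i ω ≤ c₂ * n * h}).toReal ≤ Real.exp (-c₃ * n) := by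
  -- parameters
  set s : ℝ := ε * h / 8 with hs_def
  have hs : 0 < s := by positivity
  set v : ℝ := -(Real.log 8 / s) with hv_def
  have hlog8 : 0 < Real.log 8 := Real.log_pos (by norm_num)
  have hv : v < 0 := by
    rw [hv_def]; exact neg_neg_iff_pos.mpr (div_pos hlog8 hs)
  -- integrability of exp(v * X) for 0 ≤ X
  have hint : ∀ X : Ω → ℝ, Measurable X → (∀ ω, 0 ≤ X ω) →
      Integrable (fun ω => Real.exp (v * X ω)) μ := by
    intro X hXm hX0
    refine Integrable.mono' (integrable_const (1:ℝ))
      ((hXm.const_mul v).exp.aestronglyMeasurable) (ae_of_all _ fun ω => ?_)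
    rw [Real.norm_eq_abs, abs_of_pos (Real.exp_pos _)]
    calc Real.exp (v * X ω) ≤ Real.exp 0 :=
          Real.exp_le_exp.mpr (mul_nonpos_of_nonpos_of_nonneg hv.le (hX0 ω))
      _ = 1 := Real.exp_zero
  -- mgf of ξ 0 at v is at most 3/4
  have hmeasset : MeasurableSet {ω | ξ 0 ω ≤ s} := measurableSet_le (hξm 0) measurable_const
  have hexp_vs : Real.exp (v * s) = 1 / 8 := by
    rw [hv_def, neg_mul, div_mul_cancel₀ _ hs.ne', Real.exp_neg,
      Real.exp_log (by norm_num : (0:ℝ) < 8)]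
    norm_num
  have hmgf : mgf (ξ 0) μ v ≤ 3 / 4 := by
    have hint2 : Integrable (fun ω =>
        Set.indicator {ω | ξ 0 ω ≤ s} (fun _ => (1:ℝ)) ω + Real.exp (v * s)) μ :=
      ((integrable_const (1:ℝ)).indicator hmeasset).add (integrable_const _)
    have hpt : ∀ ω, Real.exp (v * ξ 0 ω) ≤
        Set.indicator {ω | ξ 0 ω ≤ s} (fun _ => (1:ℝ)) ω + Real.exp (v * s) := by
      intro ω
      by_cases hωs : ξ 0 ω ≤ s
      · have hi : ({ω | ξ 0 ω ≤ s}).indicator (fun _ => (1:ℝ)) ω = 1 :=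
          Set.indicator_of_mem (show ω ∈ {ω | ξ 0 ω ≤ s} from hωs) _
        rw [hi]
        have : Real.exp (v * ξ 0 ω) ≤ 1 := by
          rw [← Real.exp_zero]
          exact Real.exp_le_exp.mpr (mul_nonpos_of_nonpos_of_nonneg hv.le (hξ0 0 ω))
        linarith [Real.exp_pos (v * s)]
      · have hi : ({ω | ξ 0 ω ≤ s}).indicator (fun _ => (1:ℝ)) ω = 0 :=
          Set.indicator_of_notMem (show ω ∉ {ω | ξ 0 ω ≤ s} from hωs) _
        rw [hi]
        have : Real.exp (v * ξ 0 ω) ≤ Real.exp (v * s) :=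
          Real.exp_le_exp.mpr (mul_le_mul_of_nonpos_left (not_le.mp hωs).le hv.le)
        have h0 : (0:ℝ) ≤ Set.indicator {ω | ξ 0 ω ≤ s} (fun _ => (1:ℝ)) ω := by positivity
        linarith
    have h1 : mgf (ξ 0) μ v ≤ ∫ ω, (Set.indicator {ω | ξ 0 ω ≤ s} (fun _ => (1:ℝ)) ω
        + Real.exp (v * s)) ∂μ :=
      integral_mono (hint (ξ 0) (hξm 0) (hξ0 0)) hint2 hpt
    have h2 : (∫ ω, (Set.indicator {ω | ξ 0 ω ≤ s} (fun _ => (1:ℝ)) ω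
        + Real.exp (v * s)) ∂μ) = (μ {ω | ξ 0 ω ≤ s}).toReal + Real.exp (v * s) := by
      rw [integral_add ((integrable_const (1:ℝ)).indicator hmeasset) (integrable_const _),
        integral_indicator_const _ hmeasset, integral_const]
      simp [measure_univ, Measure.real]
    have h3 : (μ {ω | ξ 0 ω ≤ s}).toReal ≤ 1 / 2 + 1 / 8 := by
      have := htail s hs
      have hse : s / (ε * h) = 1 / 8 := by
        rw [hs_def]; field_simp
      linarith [this, hse ▸ this]
    rw [hexp_vs] at h1 h2
    calc mgf (ξ 0) μ v ≤ (μ {ω | ξ 0 ω ≤ s}).toReal + 1 / 8 := h2 ▸ h1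
      _ ≤ 3 / 4 := by linarith
  -- choose constants
  refine ⟨ε / 100, by positivity, Real.log (4/3) - 6 * Real.log 2 / 25, ?_, ?_⟩
  · -- positivity of c₃
    have h64 : (6:ℝ) * Real.log 2 = Real.log 64 := by
      rw [show (64:ℝ) = 2 ^ (6:ℕ) by norm_num, Real.log_pow]; ring
    have h43 : (25:ℝ) * Real.log (4/3) = Real.log ((4/3) ^ (25:ℕ)) := by
      rw [Real.log_pow]; ring
    have hlt : Real.log 64 < Real.log ((4/3:ℝ) ^ (25:ℕ)) := by
      apply Real.log_lt_log (by norm_num)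
      norm_num
    nlinarith [hlt, h64, h43]
  · intro n
    -- Chernoff bound
    set X : Ω → ℝ := ∑ i ∈ Finset.range n, ξ i with hX_def
    have hXeq : ∀ ω, X ω = ∑ i ∈ Finset.range n, ξ i ω := fun ω => by
      rw [hX_def, Finset.sum_apply]
    have hXm : Measurable X := by
      rw [show X = fun ω => ∑ i ∈ Finset.range n, ξ i ω from funext hXeq]
      exact Finset.measurable_sum _ fun i _ => hξm i
    have hX0 : ∀ ω, 0 ≤ X ω := fun ω => by
      rw [hXeq]; exact Finset.sum_nonneg fun i _ => hξ0 i ω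
    have hset : {ω | ∑ i ∈ Finset.range n, ξ i ω ≤ ε / 100 * n * h}
        = {ω | X ω ≤ ε / 100 * n * h} := by
      ext ω; simp [hXeq]
    have hcher := measure_le_le_exp_mul_mgf (μ := μ) (X := X) (ε / 100 * n * h) hv.le
      (hint X hXm hX0)
    -- mgf of the sum
    have hmgf_sum : mgf X μ v = (mgf (ξ 0) μ v) ^ n := by
      rw [hX_def, hindep.mgf_sum hξm]
      have : ∀ i ∈ Finset.range n, mgf (ξ i) μ v = mgf (ξ 0) μ v := by
        intro i _
        exact ((hident i).comp (measurable_exp.comp (measurable_const_mul v))).integral_eq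
      rw [Finset.prod_congr rfl this, Finset.prod_const, Finset.card_range]
    have hmgf_pow : (mgf (ξ 0) μ v) ^ n ≤ (3/4:ℝ) ^ n :=
      pow_le_pow_left₀ (mgf_nonneg) hmgf n
    have hfinal : (μ {ω | X ω ≤ ε / 100 * n * h}).toReal ≤
        Real.exp (-v * (ε / 100 * n * h)) * (3/4:ℝ) ^ n := by
      refine hcher.trans ?_
      rw [hmgf_sum]
      exact mul_le_mul_of_nonneg_left hmgf_pow (Real.exp_pos _).le
    rw [hset]
    refine hfinal.trans ?_
    -- compute the exponent
    have hεne := hε.ne'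
    have hhne := hh.ne'
    have hexp_arg : -v * (ε / 100 * n * h) = 6 * Real.log 2 / 25 * n := by
      rw [hv_def, neg_neg, hs_def,
        show Real.log 8 = 3 * Real.log 2 by
          rw [show (8:ℝ) = 2 ^ (3:ℕ) by norm_num, Real.log_pow]; ring]
      field_simp
      ring
    have hpow : (3/4:ℝ) ^ n = Real.exp (Real.log (3/4) * n) := by
      rw [mul_comm, Real.exp_nat_mul, Real.exp_log (by norm_num : (0:ℝ) < 3/4)]
    rw [hexp_arg, hpow, ← Real.exp_add]
    apply Real.exp_le_exp.mpr
    have hlog34 : Real.log (3/4) = -Real.log (4/3) := by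
      rw [← Real.log_inv]; norm_num
    rw [hlog34]
    ring_nf
    nlinarith [Nat.cast_nonneg (α := ℝ) n]
end

section
/- Let N ∈ ℕ, p, q ∈ [0,1], λ > 0, and let M be a random variable such that conditionally on a random variable W, M - 1 is binomial with parameters W - 1 and p, where W is a positive-integer random variable. Then P(M ≥ λ) ≤ P(pW ≥ λ/2) + P(Bin(⌈λ/(2p)⌉, p) ≥ λ - 1). -/
open MeasureTheory Finset

/-- Probability that a binomial with parameters `N`, `p` lies in `{k : x ≤ k}`. -/
noncomputable def binomPMF (N : ℕ) (p : ℝ) (k : ℕ) : ℝ :=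
  (N.choose k : ℝ) * p ^ k * (1 - p) ^ (N - k)

noncomputable def binomTail (N : ℕ) (p : ℝ) (x : ℝ) : ℝ :=
  ∑ k ∈ Finset.range (N + 1), if x ≤ (k : ℝ) then binomPMF N p k else 0

lemma binomPMF_nonneg {p : ℝ} (hp0 : 0 ≤ p) (hp1 : p ≤ 1) (N k : ℕ) :
    0 ≤ binomPMF N p k := by
  unfold binomPMF
  have h1 : (0:ℝ) ≤ 1 - p := by linarith
  positivity

lemma binomPMF_of_lt {N k : ℕ} (h : N < k) (p : ℝ) : binomPMF N p k = 0 := by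
  unfold binomPMF
  rw [Nat.choose_eq_zero_of_lt h]
  simp

lemma binomPMF_pascal (p : ℝ) (n j : ℕ) (hj : j ≤ n) :
    binomPMF (n+1) p (j+1) = p * binomPMF n p j + (1-p) * binomPMF n p (j+1) := by
  rcases lt_or_eq_of_le hj with h | h
  · unfold binomPMF
    rw [Nat.choose_succ_succ]
    have h2 : n - j = (n - (j+1)) + 1 := by omega
    push_cast
    rw [h2, pow_succ]
    ring
  · subst h
    unfold binomPMF
    rw [Nat.choose_self, Nat.choose_self, Nat.choose_eq_zero_of_lt (Nat.lt_succ_self _)]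
    simp [pow_succ]
    ring

lemma sum_binomPMF (p : ℝ) (N : ℕ) : ∑ k ∈ range (N+1), binomPMF N p k = 1 := by
  have h := add_pow p (1-p) N
  have hp1 : p + (1-p) = 1 := by ring
  rw [hp1, one_pow] at h
  rw [show (∑ k ∈ range (N+1), binomPMF N p k)
      = ∑ k ∈ range (N+1), p^k * (1-p)^(N-k) * (N.choose k : ℝ) from
    Finset.sum_congr rfl (fun k _ => by unfold binomPMF; ring)]
  rw [← h]

lemma binomTail_nonneg {p : ℝ} (hp0 : 0 ≤ p) (hp1 : p ≤ 1) (N : ℕ) (x : ℝ) :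
    0 ≤ binomTail N p x :=
  Finset.sum_nonneg fun k _ => by
    split
    · exact binomPMF_nonneg hp0 hp1 N k
    · exact le_refl 0

lemma binomTail_succ {p : ℝ} (hp0 : 0 ≤ p) (hp1 : p ≤ 1) (n : ℕ) (x : ℝ) :
    binomTail n p x ≤ binomTail (n+1) p x := by
  by_cases hx : x ≤ 0
  · have e : ∀ m : ℕ, binomTail m p x = 1 := by
      intro m
      unfold binomTail
      rw [Finset.sum_congr rfl (fun k _ => if_pos (hx.trans (Nat.cast_nonneg k)))]
      exact sum_binomPMF p m
    rw [e n, e (n+1)]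
  · push_neg at hx
    have key : binomTail (n+1) p x
        = ∑ j ∈ range (n+1), (if x ≤ ((j:ℝ)+1) then binomPMF (n+1) p (j+1) else 0) := by
      unfold binomTail
      rw [Finset.sum_range_succ']
      have h0 : (if x ≤ ((0:ℕ):ℝ) then binomPMF (n+1) p 0 else 0) = 0 := by
        rw [if_neg]; push_cast; linarith
      rw [h0, add_zero]
      exact Finset.sum_congr rfl (fun j _ => by push_cast; rfl)
    have expand : binomTail (n+1) p x
        = p * (∑ j ∈ range (n+1), if x ≤ ((j:ℝ)+1) then binomPMF n p j else 0)
          + (1-p) * (∑ j ∈ range (n+1), if x ≤ ((j:ℝ)+1) then binomPMF n p (j+1) else 0) := by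
      rw [key, Finset.mul_sum, Finset.mul_sum, ← Finset.sum_add_distrib]
      refine Finset.sum_congr rfl (fun j hj => ?_)
      split
      · exact binomPMF_pascal p n j (Finset.mem_range_succ_iff.mp hj)
      · ring
    have hA : binomTail n p x ≤ ∑ j ∈ range (n+1), if x ≤ ((j:ℝ)+1) then binomPMF n p j else 0 := by
      unfold binomTail
      refine Finset.sum_le_sum (fun j _ => ?_)
      by_cases h : x ≤ (j:ℝ)
      · rw [if_pos h, if_pos (by linarith)]
      · rw [if_neg h]
        split
        · exact binomPMF_nonneg hp0 hp1 n j
        · exact le_refl 0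
    have hB : binomTail n p x ≤ ∑ j ∈ range (n+1), if x ≤ ((j:ℝ)+1) then binomPMF n p (j+1) else 0 := by
      unfold binomTail
      rw [Finset.sum_range_succ']
      have h0 : (if x ≤ ((0:ℕ):ℝ) then binomPMF n p 0 else 0) = 0 := by
        rw [if_neg]; push_cast; linarith
      rw [h0, add_zero, Finset.sum_range_succ]
      have hlast : (0:ℝ) ≤ (if x ≤ ((n:ℝ)+1) then binomPMF n p (n+1) else 0) := by
        split
        · exact binomPMF_nonneg hp0 hp1 n (n+1)
        · exact le_refl 0
      have : (∑ j ∈ range n, if x ≤ ((j+1:ℕ):ℝ) then binomPMF n p (j+1) else 0)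
          = ∑ j ∈ range n, if x ≤ ((j:ℝ)+1) then binomPMF n p (j+1) else 0 :=
        Finset.sum_congr rfl (fun j _ => by push_cast; rfl)
      rw [this]
      linarith
    rw [expand]
    nlinarith [binomTail_nonneg hp0 hp1 n x]

lemma binomTail_mono {p : ℝ} (hp0 : 0 ≤ p) (hp1 : p ≤ 1) {n m : ℕ} (h : n ≤ m) (x : ℝ) :
    binomTail n p x ≤ binomTail m p x := by
  induction h with
  | refl => exact le_refl _
  | step h ih => exact ih.trans (binomTail_succ hp0 hp1 _ x)

/-- If, conditionally on `W`, `M - 1` is binomial with parameters `W - 1` and `p`, then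
`P(M ≥ λ) ≤ P(pW ≥ λ/2) + P(Bin(⌈λ/(2p)⌉, p) ≥ λ - 1)`. -/
theorem stmt_14 {Ω : Type*} [MeasurableSpace Ω] (μ : Measure Ω) [IsProbabilityMeasure μ]
    (W M : Ω → ℕ) (hWm : Measurable W) (hMm : Measurable M) (hW1 : ∀ ω, 1 ≤ W ω)
    (p lam : ℝ) (hp : p ∈ Set.Ioc (0:ℝ) 1) (hlam : 0 < lam)
    (hMW : ∀ w k : ℕ, (μ {ω | W ω = w ∧ M ω = k}).toReal
        = (μ {ω | W ω = w}).toReal * (if 1 ≤ k then binomPMF (w - 1) p (k - 1) else 0)) :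
    (μ {ω | lam ≤ (M ω : ℝ)}).toReal
      ≤ (μ {ω | lam / 2 ≤ p * (W ω : ℝ)}).toReal
        + binomTail ⌈lam / (2 * p)⌉₊ p (lam - 1) := by
  obtain ⟨hp0, hp1⟩ := hp
  set N := ⌈lam / (2*p)⌉₊ with hN
  set T := binomTail N p (lam - 1) with hTdef
  have hT0 : 0 ≤ T := binomTail_nonneg hp0.le hp1 _ _
  -- Step 1: split event
  have step1 : μ {ω | lam ≤ (M ω : ℝ)}
      ≤ μ {ω | lam / 2 ≤ p * (W ω : ℝ)}
        + μ {ω | lam ≤ (M ω : ℝ) ∧ p * (W ω : ℝ) < lam / 2} := by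
    refine le_trans (measure_mono ?_) (measure_union_le _ _)
    intro ω hω
    by_cases h : lam / 2 ≤ p * (W ω : ℝ)
    · exact Or.inl h
    · exact Or.inr ⟨hω, lt_of_not_ge h⟩
  -- Step 2: decompose by value of W
  have step2 : μ {ω | lam ≤ (M ω : ℝ) ∧ p * (W ω : ℝ) < lam / 2}
      ≤ ∑ w ∈ range (N+1), μ {ω | W ω = w ∧ lam ≤ (M ω : ℝ)} := by
    refine le_trans (measure_mono ?_) (measure_biUnion_finset_le _ _)
    rintro ω ⟨h1, h2⟩
    have hwlt : (W ω : ℝ) < lam / (2*p) := by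
      rw [lt_div_iff₀ (by positivity)]
      nlinarith
    have hwN : W ω < N + 1 := by
      have : (W ω : ℝ) < (N : ℝ) := lt_of_lt_of_le hwlt (Nat.le_ceil _)
      have := Nat.cast_lt.mp this
      omega
    exact Set.mem_biUnion (mem_range.mpr hwN) ⟨rfl, h1⟩
  -- Step 3: per-w bound
  have step3 : ∀ w ∈ range (N+1),
      (μ {ω | W ω = w ∧ lam ≤ (M ω : ℝ)}).toReal ≤ (μ {ω | W ω = w}).toReal * T := by
    intro w hwmem
    rcases Nat.eq_zero_or_pos w with rfl | hw1
    · have he : {ω | W ω = 0 ∧ lam ≤ (M ω : ℝ)} = ∅ := by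
        ext ω
        simp only [Set.mem_setOf_eq, Set.mem_empty_iff_false, iff_false, not_and]
        intro h
        exact absurd h (by have := hW1 ω; omega)
      rw [he]
      simp only [measure_empty, ENNReal.toReal_zero]
      exact mul_nonneg ENNReal.toReal_nonneg hT0
    · -- null tail
      have hnull : ∀ k, w < k → μ {ω | W ω = w ∧ M ω = k} = 0 := by
        intro k hk
        have ht := hMW w k
        rw [if_pos (by omega), binomPMF, Nat.choose_eq_zero_of_lt (by omega)] at ht
        simp only [Nat.cast_zero, zero_mul, mul_zero] at ht
        exact ((ENNReal.toReal_eq_zero_iff _).mp ht).resolve_right (measure_ne_top μ _)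
      have hTnull : μ {ω | W ω = w ∧ w < M ω} = 0 := by
        have hsub : {ω | W ω = w ∧ w < M ω} ⊆ ⋃ k, {ω | w < k ∧ W ω = w ∧ M ω = k} := by
          rintro ω ⟨h1, h2⟩
          exact Set.mem_iUnion.mpr ⟨M ω, h2, h1, rfl⟩
        refine measure_mono_null hsub (measure_iUnion_null fun k => ?_)
        by_cases hk : w < k
        · exact measure_mono_null (by rintro ω ⟨_, h1, h2⟩; exact ⟨h1, h2⟩) (hnull k hk)
        · have : {ω | w < k ∧ W ω = w ∧ M ω = k} = ∅ := by
            ext ω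
            simp only [Set.mem_setOf_eq, Set.mem_empty_iff_false, iff_false, not_and]
            exact fun h => absurd h hk
          rw [this, measure_empty]
      have hcover : {ω | W ω = w ∧ lam ≤ (M ω : ℝ)} ⊆
          (⋃ k ∈ range (w+1), {ω | W ω = w ∧ M ω = k ∧ lam ≤ (k : ℝ)})
            ∪ {ω | W ω = w ∧ w < M ω} := by
        rintro ω ⟨h1, h2⟩
        by_cases hk : M ω ≤ w
        · exact Or.inl (Set.mem_biUnion (mem_range.mpr (by omega)) ⟨h1, rfl, h2⟩)
        · exact Or.inr ⟨h1, by omega⟩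
      have hmeas_le : μ {ω | W ω = w ∧ lam ≤ (M ω : ℝ)}
          ≤ ∑ k ∈ range (w+1), μ {ω | W ω = w ∧ M ω = k ∧ lam ≤ (k : ℝ)} :=
        calc μ {ω | W ω = w ∧ lam ≤ (M ω : ℝ)}
            ≤ μ ((⋃ k ∈ range (w+1), {ω | W ω = w ∧ M ω = k ∧ lam ≤ (k : ℝ)})
                ∪ {ω | W ω = w ∧ w < M ω}) := measure_mono hcover
          _ ≤ μ (⋃ k ∈ range (w+1), {ω | W ω = w ∧ M ω = k ∧ lam ≤ (k : ℝ)})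
                + μ {ω | W ω = w ∧ w < M ω} := measure_union_le _ _
          _ = μ (⋃ k ∈ range (w+1), {ω | W ω = w ∧ M ω = k ∧ lam ≤ (k : ℝ)}) := by
                rw [hTnull, add_zero]
          _ ≤ _ := measure_biUnion_finset_le _ _
      have hterm : ∀ k ∈ range (w+1), (μ {ω | W ω = w ∧ M ω = k ∧ lam ≤ (k : ℝ)}).toReal
          = if lam ≤ (k : ℝ) then (μ {ω | W ω = w}).toReal * binomPMF (w-1) p (k-1) else 0 := by
        intro k _
        by_cases hk : lam ≤ (k : ℝ)
        · have hset : {ω | W ω = w ∧ M ω = k ∧ lam ≤ (k : ℝ)} = {ω | W ω = w ∧ M ω = k} := by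
            ext ω; simp [hk]
        
          have hk1 : 1 ≤ k := by
            by_contra h
            push_neg at h
            interval_cases k
            simp only [Nat.cast_zero] at hk
            linarith
          rw [hset, hMW, if_pos hk1, if_pos hk]
        · have hset : {ω | W ω = w ∧ M ω = k ∧ lam ≤ (k : ℝ)} = ∅ := by
            ext ω
            simp only [Set.mem_setOf_eq, Set.mem_empty_iff_false, iff_false, not_and]
            exact fun _ _ => hk
          rw [hset, if_neg hk]
          simp
      have htoReal : (μ {ω | W ω = w ∧ lam ≤ (M ω : ℝ)}).toReal
          ≤ ∑ k ∈ range (w+1),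
              if lam ≤ (k : ℝ) then (μ {ω | W ω = w}).toReal * binomPMF (w-1) p (k-1) else 0 := by
        rw [← Finset.sum_congr rfl hterm]
        rw [← ENNReal.toReal_sum (fun k _ => measure_ne_top μ _)]
        exact ENNReal.toReal_mono (ENNReal.sum_lt_top.mpr (fun k _ => measure_lt_top μ _)).ne hmeas_le
      have hfactor : (∑ k ∈ range (w+1),
            if lam ≤ (k : ℝ) then (μ {ω | W ω = w}).toReal * binomPMF (w-1) p (k-1) else 0)
          = (μ {ω | W ω = w}).toReal
              * ∑ k ∈ range (w+1), if lam ≤ (k : ℝ) then binomPMF (w-1) p (k-1) else 0 := by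
        rw [Finset.mul_sum]
        refine Finset.sum_congr rfl (fun k _ => ?_)
        split
        · rfl
        · rw [mul_zero]
      have hsumtail : (∑ k ∈ range (w+1), if lam ≤ (k : ℝ) then binomPMF (w-1) p (k-1) else 0)
          = binomTail (w-1) p (lam - 1) := by
        obtain ⟨w', rfl⟩ : ∃ w', w = w' + 1 := ⟨w - 1, by omega⟩
        rw [Finset.sum_range_succ']
        have h0 : (if lam ≤ ((0:ℕ) : ℝ) then binomPMF (w'+1-1) p (0-1) else 0) = 0 := by
          rw [if_neg]
          push_cast
          linarith
        rw [h0, add_zero]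
        unfold binomTail
        simp only [Nat.add_sub_cancel]
        refine Finset.sum_congr rfl (fun j _ => ?_)
        have hiff : lam ≤ ((j+1 : ℕ) : ℝ) ↔ lam - 1 ≤ (j : ℝ) := by
          push_cast
          constructor <;> intro h <;> linarith
        rw [if_congr hiff rfl rfl]
      have hlast : binomTail (w-1) p (lam - 1) ≤ T := by
        rw [hTdef]
        exact binomTail_mono hp0.le hp1 (by have := mem_range.mp hwmem; omega) _
      calc (μ {ω | W ω = w ∧ lam ≤ (M ω : ℝ)}).toReal
          ≤ (μ {ω | W ω = w}).toReal * binomTail (w-1) p (lam - 1) := by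
            rw [← hsumtail, ← hfactor]; exact htoReal
        _ ≤ (μ {ω | W ω = w}).toReal * T :=
            mul_le_mul_of_nonneg_left hlast ENNReal.toReal_nonneg
  -- Step 4: sum of measures ≤ 1
  have hsum1 : ∑ w ∈ range (N+1), (μ {ω | W ω = w}).toReal ≤ 1 := by
    have hdisj : (↑(range (N+1)) : Set ℕ).PairwiseDisjoint
        (fun w => {ω | W ω = w}) := by
      intro i _ j _ hij
      refine Set.disjoint_left.mpr ?_
      rintro ω (hi : W ω = i) (hj : W ω = j)
      exact hij (hi ▸ hj ▸ rfl)
    have hmeas : ∀ w ∈ range (N+1), MeasurableSet {ω | W ω = w} :=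
      fun w _ => hWm (measurableSet_singleton w)
    have hEq : ∑ w ∈ range (N+1), μ {ω | W ω = w}
        = μ (⋃ w ∈ range (N+1), {ω | W ω = w}) :=
      (measure_biUnion_finset hdisj hmeas).symm
    have hle : ∑ w ∈ range (N+1), μ {ω | W ω = w} ≤ 1 := by
      rw [hEq]
      exact (measure_mono (Set.subset_univ _)).trans_eq measure_univ
    calc ∑ w ∈ range (N+1), (μ {ω | W ω = w}).toReal
        = (∑ w ∈ range (N+1), μ {ω | W ω = w}).toReal :=
          (ENNReal.toReal_sum (fun w _ => measure_ne_top μ _)).symm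
      _ ≤ (1 : ENNReal).toReal := ENNReal.toReal_mono (by simp) hle
      _ = 1 := by simp
  -- Combine
  have hE : (μ {ω | lam ≤ (M ω : ℝ) ∧ p * (W ω : ℝ) < lam / 2}).toReal ≤ T :=
    calc (μ {ω | lam ≤ (M ω : ℝ) ∧ p * (W ω : ℝ) < lam / 2}).toReal
        ≤ (∑ w ∈ range (N+1), μ {ω | W ω = w ∧ lam ≤ (M ω : ℝ)}).toReal :=
          ENNReal.toReal_mono (ENNReal.sum_lt_top.mpr (fun w _ => measure_lt_top μ _)).ne step2
      _ = ∑ w ∈ range (N+1), (μ {ω | W ω = w ∧ lam ≤ (M ω : ℝ)}).toReal :=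
          ENNReal.toReal_sum (fun w _ => measure_ne_top μ _)
      _ ≤ ∑ w ∈ range (N+1), (μ {ω | W ω = w}).toReal * T := Finset.sum_le_sum step3
      _ = (∑ w ∈ range (N+1), (μ {ω | W ω = w}).toReal) * T := (Finset.sum_mul _ _ _).symm
      _ ≤ 1 * T := mul_le_mul_of_nonneg_right hsum1 hT0
      _ = T := one_mul T
  calc (μ {ω | lam ≤ (M ω : ℝ)}).toReal
      ≤ (μ {ω | lam / 2 ≤ p * (W ω : ℝ)}
          + μ {ω | lam ≤ (M ω : ℝ) ∧ p * (W ω : ℝ) < lam / 2}).toReal :=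
        ENNReal.toReal_mono
          (ENNReal.add_ne_top.mpr ⟨measure_ne_top μ _, measure_ne_top μ _⟩) step1
    _ = (μ {ω | lam / 2 ≤ p * (W ω : ℝ)}).toReal
          + (μ {ω | lam ≤ (M ω : ℝ) ∧ p * (W ω : ℝ) < lam / 2}).toReal :=
        ENNReal.toReal_add (measure_ne_top μ _) (measure_ne_top μ _)
    _ ≤ (μ {ω | lam / 2 ≤ p * (W ω : ℝ)}).toReal + T := by linarith
end
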